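/- Let (E,d) be a complete metric space satisfying the median inequality, let G be a group of isometries of E, and let H be a subgroup of G of index 2. If H is fixating then G is fixating. -/

import Mathlib

/-- Let `E` be a complete metric space satisfying the median inequality, `G` a
group of isometries of `E`, and `H ≤ G` a subgroup of index `2`. If `H` is
fixating (every GAF subgroup of `H` is a GAG) then `G` is fixating. -/
theorem fixating_of_index_two_fixating_subgroup
    {E : Type*} [MetricSpace E] [CompleteSpace E]
    (hmed : ∀ x y : E, ∃ m : E, ∀ z : E,
      dist z m ^ 2 ≤ (dist z x ^ 2 + dist z y ^ 2) / 2 - dist x y ^ 2 / 4)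
    (G H : Subgroup (Equiv.Perm E))
    (hiso : ∀ g ∈ G, ∀ x y : E, dist (g x) (g y) = dist x y)
    (hHG : H ≤ G)
    (hindex : H.relIndex G = 2)
    (hHfix : ∀ K : Subgroup (Equiv.Perm E), K ≤ H →
      (∀ g ∈ K, ∃ x : E, g x = x) → ∃ x : E, ∀ g ∈ K, g x = x) :
    ∀ K : Subgroup (Equiv.Perm E), K ≤ G →
      (∀ g ∈ K, ∃ x : E, g x = x) → ∃ x : E, ∀ g ∈ K, g x = x := by
  intro K hKG hKfp
  -- key index-2 fact: product of two elements of G outside H lies in H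
  have hmul : ∀ a b : Equiv.Perm E, a ∈ G → b ∈ G → (a * b ∈ H ↔ (a ∈ H ↔ b ∈ H)) := by
    intro a b ha hb
    have h2 : (H.subgroupOf G).index = 2 := hindex
    have := Subgroup.mul_mem_iff_of_index_two h2 (a := ⟨a, ha⟩) (b := ⟨b, hb⟩)
    simpa [Subgroup.mem_subgroupOf] using this
  -- the subgroup K ⊓ H
  set L : Subgroup (Equiv.Perm E) := K ⊓ H with hL
  have hLH : L ≤ H := inf_le_right
  have hLfp : ∀ g ∈ L, ∃ x : E, g x = x := fun g hg => hKfp g hg.1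
  obtain ⟨x, hx⟩ := hHfix L hLH hLfp
  by_cases hKH : K ≤ H
  · exact ⟨x, fun g hg => hx g ⟨hg, hKH hg⟩⟩
  · obtain ⟨σ, hσK, hσH⟩ := SetLike.not_le_iff_exists.mp hKH
    have hσG : σ ∈ G := hKG hσK
    set y := σ x with hy
    obtain ⟨m, hm⟩ := hmed x y
    set d := dist x y with hd
    have hdnn : 0 ≤ d := dist_nonneg
    -- m is a midpoint
    have hmx : dist x m ≤ d / 2 := by
      clear hKH
      have := hm x
      simp only [dist_self] at this
      nlinarith [dist_nonneg (x := x) (y := m)]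
    have hmy : dist y m ≤ d / 2 := by
      clear hKH
      have := hm y
      simp only [dist_self, dist_comm y x] at this
      nlinarith [dist_nonneg (x := y) (y := m)]
    -- uniqueness of the midpoint
    have huniq : ∀ m' : E, dist m' x ≤ d / 2 → dist m' y ≤ d / 2 → m' = m := by
      intro m' h1 h2
      clear hKH
      have := hm m'
      have h0 : dist m' m = 0 := by
        nlinarith [dist_nonneg (x := m' ) (y := m), dist_nonneg (x := m') (y := x),
          dist_nonneg (x := m') (y := y)]
      exact dist_eq_zero.mp h0
    -- every element of L fixes y as well
    have hLy : ∀ g ∈ L, g y = y := by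
      intro g hg
      have hgK : g ∈ K := hg.1
      have hgH : g ∈ H := hg.2
      have hσinvH : σ⁻¹ ∉ H := fun h => hσH (by simpa using inv_mem h)
      have hσinvG : σ⁻¹ ∈ G := inv_mem hσG
      have h1 : σ⁻¹ * g ∉ H := by
        intro h
        rw [hmul _ _ hσinvG (hHG hgH)] at h
        exact hσinvH (h.mpr hgH)
      have h2 : σ⁻¹ * g * σ ∈ H := by
        rw [hmul _ _ (mul_mem hσinvG (hKG hgK)) hσG]
        exact ⟨fun h => absurd h h1, fun h => absurd h hσH⟩
      have h2K : σ⁻¹ * g * σ ∈ K := mul_mem (mul_mem (inv_mem hσK) hgK) hσK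
      have := hx _ (Subgroup.mem_inf.mpr ⟨h2K, h2⟩)
      -- (σ⁻¹ * g * σ) x = x  ⇒  g (σ x) = σ x
      have : g (σ x) = σ x := by
        have h3 : σ⁻¹ (g (σ x)) = x := this
        calc g (σ x) = σ (σ⁻¹ (g (σ x))) := by simp
          _ = σ x := by rw [h3]
      simpa [hy] using this
    -- every element of L fixes m
    have hLm : ∀ g ∈ L, g m = m := by
      intro g hg
      have hgG : g ∈ G := hKG hg.1
      refine huniq (g m) ?_ ?_
      · calc dist (g m) x = dist (g m) (g x) := by rw [hx g hg]
          _ = dist m x := hiso g hgG m x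
          _ = dist x m := dist_comm m x
          _ ≤ d / 2 := hmx
      · calc dist (g m) y = dist (g m) (g y) := by rw [hLy g hg]
          _ = dist m y := hiso g hgG m y
          _ = dist y m := dist_comm m y
          _ ≤ d / 2 := hmy
    -- σ fixes m
    have hσ2 : σ * σ ∈ L := by
      refine Subgroup.mem_inf.mpr ⟨mul_mem hσK hσK, ?_⟩
      rw [hmul _ _ hσG hσG]
    have hσ2x : σ (σ x) = x := hx _ hσ2
    have hσm : σ m = m := by
      refine huniq (σ m) ?_ ?_
      · calc dist (σ m) x = dist (σ m) (σ (σ x)) := by rw [hσ2x]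
          _ = dist m (σ x) := hiso σ hσG m (σ x)
          _ = dist y m := by rw [dist_comm, hy]
          _ ≤ d / 2 := hmy
      · calc dist (σ m) y = dist (σ m) (σ x) := by rw [hy]
          _ = dist m x := hiso σ hσG m x
          _ = dist x m := dist_comm m x
          _ ≤ d / 2 := hmx
    -- conclude
    refine ⟨m, fun g hg => ?_⟩
    by_cases hgH : g ∈ H
    · exact hLm g ⟨hg, hgH⟩
    · have hσinvH : σ⁻¹ ∉ H := fun h => hσH (by simpa using inv_mem h)
      have hσinvG : σ⁻¹ ∈ G := inv_mem hσG
      have hh : σ⁻¹ * g ∈ H := by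
        rw [hmul _ _ hσinvG (hKG hg)]
        exact ⟨fun h => absurd h hσinvH, fun h => absurd h hgH⟩
      have hhL : σ⁻¹ * g ∈ L := Subgroup.mem_inf.mpr ⟨mul_mem (inv_mem hσK) hg, hh⟩
      have := hLm _ hhL
      have h4 : σ⁻¹ (g m) = m := this
      calc g m = σ (σ⁻¹ (g m)) := by simp
        _ = σ m := by rw [h4]
        _ = m := hσm
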